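/- Let x_1, x_2, … be a sequence of numbers in (−∞, 0] such that ∑_{i=1}^{∞} x_i converges to a finite value in (−∞, 0]. Then, writing x_d := (x_1, …, x_d), one has P(η_{T(d)} ≤ x_d) → exp(∑_{i=1}^{∞} x_i) = lim_{d → ∞} P(η_1 ≤ x_d) as d → ∞. -/

import Mathlib

open MeasureTheory ProbabilityTheory Filter Topology
open Set
open scoped ENNReal NNReal

noncomputable section

/-- `X m` is a complete record: each of its components strictly exceeds the corresponding
component of all previous observations `X i`, `1 ≤ i < m`.  In particular `X 1` is a
complete record by convention (vacuously). -/
def IsCompleteRecord {Ω : Type*} {d : ℕ} (X : ℕ → Ω → Fin d → ℝ) (m : ℕ) (ω : Ω) : Prop :=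
  ∀ i, 1 ≤ i → i < m → ∀ j, X i ω j < X m ω j

/-- `T = sup {m ∈ ℕ : X m is a complete record}`, the index of the terminal complete
record (for `d ≥ 2` the set of complete-record indices is a.s. finite, so this is the
index of the last complete record; `sSup` of an infinite set of naturals is junk `0`). -/
def terminalRecordIndex {Ω : Type*} {d : ℕ} (X : ℕ → Ω → Fin d → ℝ) (ω : Ω) : ℕ :=
  sSup {m : ℕ | 1 ≤ m ∧ IsCompleteRecord X m ω}

def negExpM : Measure ℝ :=
  (volume.restrict (Set.Iic (0:ℝ))).withDensity fun t => ENNReal.ofReal (Real.exp t)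

lemma lint_exp_Iic (a : ℝ) :
    ∫⁻ t in Set.Iic a, ENNReal.ofReal (Real.exp t) = ENNReal.ofReal (Real.exp a) := by
  rw [← ofReal_integral_eq_lintegral_ofReal (integrableOn_exp_Iic a)
    (Filter.Eventually.of_forall fun t => (Real.exp_pos t).le), integral_exp_Iic]

lemma lint_exp_mul (c : ℝ) (hc : 1 ≤ c) :
    ∫⁻ t in Set.Iic (0:ℝ), ENNReal.ofReal (Real.exp (c * t)) = ENNReal.ofReal (1 / c) := by
  have hc0 : 0 < c := lt_of_lt_of_le one_pos hc
  have hint : IntegrableOn (fun t => Real.exp (c * t)) (Set.Iic (0:ℝ)) := by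
    refine (integrableOn_exp_Iic 0).mono' ?_ ?_
    · exact (Real.measurable_exp.comp (measurable_const.mul measurable_id)).aestronglyMeasurable
    · filter_upwards [ae_restrict_mem measurableSet_Iic] with t ht
      rw [Real.norm_eq_abs, abs_of_pos (Real.exp_pos _)]
      exact Real.exp_le_exp.2 (by nlinarith [Set.mem_Iic.1 ht])
  rw [← ofReal_integral_eq_lintegral_ofReal hint
    (Filter.Eventually.of_forall fun t => (Real.exp_pos _).le)]
  congr 1
  have h1 := integral_comp_neg_Ioi (c := 0) (f := fun t => Real.exp (c * t))
  rw [neg_zero] at h1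
  rw [← h1]
  have h2 : ∀ t : ℝ, Real.exp (c * -t) = (fun y => Real.exp (-y)) (c * t) := by
    intro t; simp [mul_comm]
  simp_rw [h2]
  rw [integral_comp_mul_left_Ioi (fun y => Real.exp (-y)) 0 hc0]
  simp [integral_exp_neg_Ioi_zero, integral_exp_Iic_zero, smul_eq_mul, one_div]

lemma negExpM_Iic (b : ℝ) : negExpM (Set.Iic b) = ENNReal.ofReal (Real.exp (min b 0)) := by
  rw [negExpM, withDensity_apply _ measurableSet_Iic, Measure.restrict_restrict measurableSet_Iic,
    Set.Iic_inter_Iic, lint_exp_Iic]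

instance : IsProbabilityMeasure negExpM := by
  constructor
  have h : negExpM Set.univ = negExpM (Set.Iic 0) := by
    rw [negExpM, withDensity_apply _ MeasurableSet.univ, withDensity_apply _ measurableSet_Iic,
      Measure.restrict_restrict measurableSet_Iic, Measure.restrict_univ, Set.Iic_inter_Iic]
    simp
  rw [h, negExpM_Iic]; simp

lemma negExpM_singleton (b : ℝ) : negExpM {b} = 0 := by
  refine withDensity_absolutelyContinuous _ _ ?_
  exact measure_mono_null (subset_refl _) (le_antisymm (le_trans (Measure.restrict_le_self _) (by simp)) zero_le)

lemma negExpM_Iio (b : ℝ) : negExpM (Set.Iio b) = ENNReal.ofReal (Real.exp (min b 0)) := by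
  have h : negExpM (Set.Iic b) = negExpM (Set.Iio b) + negExpM {b} := by
    rw [← Set.Iio_union_right]
    exact measure_union (by simp) (measurableSet_singleton b)
  rw [negExpM_singleton, add_zero] at h
  rw [← h, negExpM_Iic]

lemma negExpM_key (k : ℕ) :
    ∫⁻ t, (negExpM (Set.Iio t)) ^ k ∂negExpM = ENNReal.ofReal (1 / (k + 1)) := by
  have h1 : ∀ t : ℝ, (negExpM (Set.Iio t)) ^ k
      = (fun t => ENNReal.ofReal (Real.exp (min t 0)) ^ k) t := fun t => by rw [negExpM_Iio]
  rw [lintegral_congr h1, negExpM,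
    lintegral_withDensity_eq_lintegral_mul _ (by fun_prop) (by fun_prop)]
  simp only [Pi.mul_apply]
  have h2 : ∀ t ∈ Set.Iic (0:ℝ),
      ENNReal.ofReal (Real.exp t) * ENNReal.ofReal (Real.exp (min t 0)) ^ k
      = ENNReal.ofReal (Real.exp (((k:ℝ) + 1) * t)) := by
    intro t ht
    rw [min_eq_left (Set.mem_Iic.1 ht), ← ENNReal.ofReal_pow (Real.exp_pos t).le,
      ← ENNReal.ofReal_mul (Real.exp_pos t).le, ← Real.exp_nat_mul, ← Real.exp_add]
    ring_nf
  rw [setLIntegral_congr_fun measurableSet_Iic h2,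
    lint_exp_mul _ (le_add_of_nonneg_left (Nat.cast_nonneg k))]

lemma negExpM_unique (ρ : Measure ℝ) [IsProbabilityMeasure ρ]
    (h : ∀ t : ℝ, t ≤ 0 → ρ (Set.Iic t) = ENNReal.ofReal (Real.exp t)) : ρ = negExpM := by
  refine MeasureTheory.Measure.ext_of_Iic ρ negExpM fun a => ?_
  rw [negExpM_Iic]
  rcases le_or_gt a 0 with ha | ha
  · rw [min_eq_left ha]; exact h a ha
  · rw [min_eq_right ha.le]
    simp only [Real.exp_zero, ENNReal.ofReal_one]
    refine le_antisymm prob_le_one ?_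
    calc (1:ℝ≥0∞) = ρ (Set.Iic 0) := by rw [h 0 le_rfl]; simp
    _ ≤ ρ (Set.Iic a) := measure_mono (Set.Iic_subset_Iic.2 ha.le)

lemma lintegral_pi_pow (ν : Measure ℝ) [IsProbabilityMeasure ν] (g : ℝ → ℝ≥0∞)
    (hg : Measurable g) :
    ∀ d : ℕ, ∫⁻ t, ∏ j : Fin d, g (t j) ∂(Measure.pi fun _ : Fin d => ν)
      = (∫⁻ s, g s ∂ν) ^ d := by
  intro d
  induction d with
  | zero => simp
  | succ n ih =>
    have hmp := measurePreserving_piFinSuccAbove (fun _ : Fin (n + 1) => ν) 0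
    set e := MeasurableEquiv.piFinSuccAbove (fun _ : Fin (n + 1) => ℝ) 0 with he_def
    have hG : Measurable (fun p : ℝ × (Fin n → ℝ) => g p.1 * ∏ j : Fin n, g (p.2 j)) := by
      refine (hg.comp measurable_fst).mul ?_
      exact Finset.measurable_prod _ fun j _ =>
        hg.comp ((measurable_pi_apply j).comp measurable_snd)
    have he : ∀ t : Fin (n + 1) → ℝ, e t = (t 0, fun j => t j.succ) := fun t => rfl
    have key : ∫⁻ t, ∏ j : Fin (n + 1), g (t j) ∂(Measure.pi fun _ => ν)
        = ∫⁻ p, g p.1 * ∏ j : Fin n, g (p.2 j)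
            ∂(ν.prod (Measure.pi fun _ : Fin n => ν)) := by
      rw [← hmp.map_eq, lintegral_map hG e.measurable]
      refine lintegral_congr fun t => ?_
      rw [he, Fin.prod_univ_succ]
    have h2 : AEMeasurable (fun u : Fin n → ℝ => ∏ j : Fin n, g (u j))
        (Measure.pi fun _ : Fin n => ν) :=
      (Finset.measurable_prod _ fun j _ => hg.comp (measurable_pi_apply j)).aemeasurable
    have hkey2 := lintegral_prod_mul (μ := ν) (f := g)
      (g := fun u : Fin n → ℝ => ∏ j : Fin n, g (u j)) hg.aemeasurable h2
    rw [key]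
    exact hkey2.trans (by rw [ih, pow_succ]; ring)

lemma lawEta {Ω : Type*} [MeasurableSpace Ω] (P : Measure Ω) [IsProbabilityMeasure P] {d : ℕ}
    (X : Ω → Fin d → ℝ) (hX : Measurable X)
    (hcomp : iIndepFun (fun (j : Fin d) ω => X ω j) P)
    (hexp : ∀ (j : Fin d) (t : ℝ), t ≤ 0 → P {ω | X ω j ≤ t} = ENNReal.ofReal (Real.exp t)) :
    P.map X = Measure.pi (fun _ : Fin d => negExpM) := by
  refine (Measure.pi_eq fun s hs => ?_).symm
  rw [Measure.map_apply hX (MeasurableSet.univ_pi hs)]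
  have h1 : X ⁻¹' (Set.pi Set.univ s)
      = ⋂ j ∈ (Finset.univ : Finset (Fin d)), (fun ω => X ω j) ⁻¹' s j := by
    ext ω; simp [Set.mem_pi]
  rw [h1, hcomp.measure_inter_preimage_eq_mul Finset.univ (fun j _ => hs j)]
  refine Finset.prod_congr rfl fun j _ => ?_
  have hj : Measurable fun ω => X ω j := (measurable_pi_apply j).comp hX
  have hμ : P.map (fun ω => X ω j) = negExpM := by
    haveI : IsProbabilityMeasure (P.map (fun ω => X ω j)) :=
      Measure.isProbabilityMeasure_map hj.aemeasurable
    refine negExpM_unique _ fun t ht => ?_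
    rw [Measure.map_apply hj measurableSet_Iic]
    exact hexp j t ht
  rw [← hμ, Measure.map_apply hj (hs j)]

lemma lawTuple {Ω α : Type*} [MeasurableSpace Ω] [MeasurableSpace α]
    (P : Measure Ω) [IsProbabilityMeasure P] (f : ℕ → Ω → α)
    (hf : ∀ k, Measurable (f k))
    (hind : iIndepFun f P)
    (μ : Measure α) [SigmaFinite μ] (hμ : ∀ k, P.map (f k) = μ) (n : ℕ) :
    P.map (fun ω (i : Fin n) => f i ω) = Measure.pi (fun _ : Fin n => μ) := by
  refine (Measure.pi_eq fun s hs => ?_).symm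
  have hW : Measurable (fun ω (i : Fin n) => f i ω) :=
    measurable_pi_lambda _ fun i => hf i
  rw [Measure.map_apply hW (MeasurableSet.univ_pi hs)]
  classical
  set sets : ℕ → Set α := fun k => if h : k < n then s ⟨k, h⟩ else Set.univ with hsets
  have h1 : (fun ω (i : Fin n) => f i ω) ⁻¹' (Set.pi Set.univ s)
      = ⋂ k ∈ Finset.range n, f k ⁻¹' sets k := by
    ext ω
    simp only [Set.mem_preimage, Set.mem_pi, Set.mem_univ, forall_true_left,
      Set.mem_iInter, Finset.mem_range]
    constructor
    · intro h k hk
      simp only [hsets, dif_pos hk]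
      exact h ⟨k, hk⟩
    · intro h i
      have := h i i.isLt
      simpa only [hsets, dif_pos i.isLt] using this
  rw [h1, hind.measure_inter_preimage_eq_mul (Finset.range n)
    (fun k _ => by by_cases h : k < n <;> simp [hsets, h, hs])]
  rw [← Fin.prod_univ_eq_prod_range (fun k => P (f k ⁻¹' sets k)) n]
  refine Finset.prod_congr rfl fun i _ => ?_
  have h2 : sets ↑i = s i := by simp [hsets, i.isLt]
  rw [h2, ← hμ i, Measure.map_apply (hf i) (hs i)]

def IsCompleteRecord' {Ω : Type*} {d : ℕ} (X : ℕ → Ω → Fin d → ℝ) (m : ℕ) (ω : Ω) : Prop :=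
  ∀ i, 1 ≤ i → i < m → ∀ j, X i ω j < X m ω j

lemma recordProb {Ω : Type*} [MeasurableSpace Ω] (P : Measure Ω) [IsProbabilityMeasure P]
    {d : ℕ} (η : ℕ → Ω → Fin d → ℝ) (hmeas : ∀ m, Measurable (η m))
    (hindep : iIndepFun (fun m : ℕ => η (m + 1)) P)
    (hident : ∀ m, P.map (η (m + 1)) = P.map (η 1))
    (hcomp : iIndepFun (fun (j : Fin d) ω => η 1 ω j) P)
    (hexp : ∀ (j : Fin d) (t : ℝ), t ≤ 0 → P {ω | η 1 ω j ≤ t} = ENNReal.ofReal (Real.exp t))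
    (n : ℕ) :
    P {ω | IsCompleteRecord' η (n + 1) ω} = ENNReal.ofReal (1 / ((n : ℝ) + 1)) ^ d := by
  classical
  set μd : Measure (Fin d → ℝ) := Measure.pi (fun _ : Fin d => negExpM) with hμd
  have hμ : P.map (η 1) = μd := lawEta P (η 1) (hmeas 1) hcomp hexp
  set f : ℕ → Ω → (Fin d → ℝ) := fun k => η (k + 1) with hf
  have hfmeas : ∀ k, Measurable (f k) := fun k => hmeas (k + 1)
  have hlawf : ∀ k, P.map (f k) = μd := fun k => (hident k).trans hμ
  set Z : Ω → Fin d → ℝ := f n with hZdef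
  set W : Ω → Fin n → Fin d → ℝ := fun ω i => f i ω with hWdef
  have hZ : Measurable Z := hfmeas n
  have hW : Measurable W := measurable_pi_lambda _ fun i => hfmeas i
  have lawW : P.map W = Measure.pi (fun _ : Fin n => μd) :=
    lawTuple P f hfmeas hindep μd hlawf n
  have hindepZW : IndepFun Z W P := by
    have h := hindep.indepFun_finset {n} (Finset.range n)
      (by simp [Finset.disjoint_left]) (fun k => hmeas (k + 1))
    have h2 := h.comp
      (φ := fun v : (({n} : Finset ℕ) : Set ℕ) → Fin d → ℝ => v ⟨n, Finset.mem_singleton_self n⟩)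
      (ψ := fun v : ((Finset.range n : Finset ℕ) : Set ℕ) → Fin d → ℝ =>
        fun i : Fin n => v ⟨i, Finset.mem_range.2 i.isLt⟩)
      (_mγ := MeasurableSpace.pi) (_mγ' := MeasurableSpace.pi)
      (measurable_pi_apply _) (measurable_pi_lambda _ fun i => measurable_pi_apply _)
    exact h2
  set S : Set ((Fin d → ℝ) × (Fin n → Fin d → ℝ)) :=
    {p | ∀ (i : Fin n) (j : Fin d), p.2 i j < p.1 j} with hSdef
  have hS : MeasurableSet S := by
    have : S = ⋂ (i : Fin n) (j : Fin d), {p : (Fin d → ℝ) × (Fin n → Fin d → ℝ) |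
        p.2 i j < p.1 j} := by
      ext p; simp [hSdef]
    rw [this]
    refine MeasurableSet.iInter fun i => MeasurableSet.iInter fun j => measurableSet_lt ?_ ?_
    · exact (measurable_pi_apply j).comp ((measurable_pi_apply i).comp measurable_snd)
    · exact (measurable_pi_apply j).comp measurable_fst
  have hRset : {ω | IsCompleteRecord' η (n + 1) ω} = (fun ω => (Z ω, W ω)) ⁻¹' S := by
    ext ω
    simp only [Set.mem_setOf_eq, Set.mem_preimage, hSdef]
    constructor
    · intro h i j
      exact h (i + 1) (by omega) (by omega) j
    · intro h k hk1 hkm j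
      have hk : k - 1 < n := by omega
      have h2 := h ⟨k - 1, hk⟩ j
      have hkk : k - 1 + 1 = k := by omega
      show η k ω j < η (n + 1) ω j
      rw [← hkk]
      exact h2
  have hpair : P.map (fun ω => (Z ω, W ω)) = μd.prod (Measure.pi fun _ : Fin n => μd) := by
    rw [(indepFun_iff_map_prod_eq_prod_map_map hZ.aemeasurable hW.aemeasurable).1 hindepZW,
      lawW, hlawf n]
  have step1 : P {ω | IsCompleteRecord' η (n + 1) ω}
      = (μd.prod (Measure.pi fun _ : Fin n => μd)) S := by
    rw [hRset, ← hpair, Measure.map_apply (hZ.prodMk hW) hS]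
  rw [step1, Measure.prod_apply hS]
  set g : ℝ → ℝ≥0∞ := fun s => negExpM (Set.Iio s) ^ n with hg
  have hgmeas : Measurable g := by
    have : g = fun s => ENNReal.ofReal (Real.exp (min s 0)) ^ n := by
      funext s; show negExpM (Set.Iio s) ^ n = _; rw [negExpM_Iio]
    rw [this]
    fun_prop
  have hslice : ∀ t : Fin d → ℝ,
      (Measure.pi fun _ : Fin n => μd) (Prod.mk t ⁻¹' S) = ∏ j : Fin d, g (t j) := by
    intro t
    have h1 : Prod.mk t ⁻¹' S
        = Set.pi Set.univ (fun _ : Fin n => Set.pi Set.univ fun j => Set.Iio (t j)) := by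
      ext u; simp [hSdef, Set.mem_pi]
    rw [h1, Measure.pi_pi]
    have h2 : μd (Set.pi Set.univ fun j => Set.Iio (t j)) = ∏ j : Fin d, negExpM (Set.Iio (t j)) := by
      rw [hμd, Measure.pi_pi]
    rw [Finset.prod_congr rfl fun (i : Fin n) _ => h2, Finset.prod_const, Finset.card_univ,
      Fintype.card_fin, ← Finset.prod_pow]
  rw [lintegral_congr hslice, hμd, lintegral_pi_pow negExpM g hgmeas d]
  congr 1
  have h3 := negExpM_key n
  simp only [hg]
  rw [h3]

lemma isCompleteRecord_eq {Ω : Type*} {d : ℕ} (X : ℕ → Ω → Fin d → ℝ) (m : ℕ) :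
    IsCompleteRecord X m = IsCompleteRecord' X m := rfl


/-- Let, for each dimension `d`, `η d 1, η d 2, …` be i.i.d. random
vectors in `ℝ^d` with independent standard negative exponential components, and let
`T(d)` be the index of the terminal complete record.  If `x 0, x 1, … ≤ 0` and
`∑ᵢ x i` converges (to a value in `(-∞, 0]`), then
`P(η_{T(d)} ≤ (x 0, …, x (d-1))) → exp (∑ᵢ x i) = lim_d P(η 1 ≤ (x 0, …, x (d-1)))`. -/
theorem terminal_record_df_approx_summable
    {Ω : Type*} [MeasurableSpace Ω] (P : Measure Ω) [IsProbabilityMeasure P]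
    (η : ∀ d : ℕ, ℕ → Ω → Fin d → ℝ)
    (hmeas : ∀ d m, Measurable (η d m))
    (hindep : ∀ d, iIndepFun (fun m : ℕ => η d (m + 1)) P)
    (hident : ∀ d m, P.map (η d (m + 1)) = P.map (η d 1))
    (hcomp : ∀ d, iIndepFun (fun (j : Fin d) ω => η d 1 ω j) P)
    (hexp : ∀ d (j : Fin d) (t : ℝ), t ≤ 0 →
      P {ω | η d 1 ω j ≤ t} = ENNReal.ofReal (Real.exp t))
    (x : ℕ → ℝ) (hx : ∀ i, x i ≤ 0) (hsum : Summable x) :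
    Tendsto (fun d : ℕ =>
        (P {ω | ∀ j : Fin d, η d (terminalRecordIndex (η d) ω) ω j ≤ x j}).toReal)
      atTop (𝓝 (Real.exp (∑' i, x i))) ∧
    Tendsto (fun d : ℕ => (P {ω | ∀ j : Fin d, η d 1 ω j ≤ x j}).toReal)
      atTop (𝓝 (Real.exp (∑' i, x i))) := by
  classical
  -- the fixed-index distribution function
  have hB : ∀ d : ℕ, P {ω | ∀ j : Fin d, η d 1 ω j ≤ x j}
      = ENNReal.ofReal (Real.exp (∑ j ∈ Finset.range d, x j)) := by
    intro d
    have hset : {ω | ∀ j : Fin d, η d 1 ω j ≤ x j}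
        = ⋂ j ∈ (Finset.univ : Finset (Fin d)), (fun ω => η d 1 ω j) ⁻¹' Set.Iic (x j) := by
      ext ω; simp [Set.mem_iInter]
    rw [hset, (hcomp d).measure_inter_preimage_eq_mul Finset.univ
      (fun j _ => measurableSet_Iic)]
    have h1 : ∀ j : Fin d, P ((fun ω => η d 1 ω j) ⁻¹' Set.Iic (x j))
        = ENNReal.ofReal (Real.exp (x (j : ℕ))) := fun j => hexp d j _ (hx j)
    rw [Finset.prod_congr rfl fun j _ => h1 j,
      ← ENNReal.ofReal_prod_of_nonneg (fun _ _ => (Real.exp_pos _).le),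
      ← Real.exp_sum, Fin.sum_univ_eq_sum_range]
  have hBtendsto : Tendsto (fun d : ℕ =>
      (P {ω | ∀ j : Fin d, η d 1 ω j ≤ x j}).toReal) atTop (𝓝 (Real.exp (∑' i, x i))) := by
    have heq : (fun d : ℕ => (P {ω | ∀ j : Fin d, η d 1 ω j ≤ x j}).toReal)
        = fun d => Real.exp (∑ j ∈ Finset.range d, x j) := by
      funext d; rw [hB d, ENNReal.toReal_ofReal (Real.exp_pos _).le]
    rw [heq]
    exact (Real.continuous_exp.tendsto _).comp hsum.hasSum.tendsto_sum_nat
  -- bound on the bad event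
  have hNsub : ∀ d : ℕ, {ω | terminalRecordIndex (η d) ω ≠ 1}
      ⊆ ⋃ k : ℕ, {ω | IsCompleteRecord (η d) (k + 2) ω} := by
    intro d ω hω
    by_contra hcon
    simp only [Set.mem_iUnion, Set.mem_setOf_eq, not_exists] at hcon
    apply hω
    have hSet : {m : ℕ | 1 ≤ m ∧ IsCompleteRecord (η d) m ω} = {1} := by
      ext m
      simp only [Set.mem_setOf_eq, Set.mem_singleton_iff]
      constructor
      · rintro ⟨h1, h2⟩
        by_contra hm1
        have hm2 : m - 2 + 2 = m := by omega
        exact hcon (m - 2) (by rwa [hm2])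
      · rintro rfl
        exact ⟨le_rfl, fun i hi1 hi2 j => absurd hi2 (by omega)⟩
    show terminalRecordIndex (η d) ω = 1
    rw [terminalRecordIndex, hSet, csSup_singleton]
  have hsum2 : Summable (fun k : ℕ => (1 / ((k : ℝ) + 2)) ^ 2) := by
    have h1 : Summable (fun n : ℕ => 1 / (n : ℝ) ^ 2) :=
      Real.summable_one_div_nat_pow.mpr one_lt_two
    have h2 := (summable_nat_add_iff 2).mpr h1
    refine h2.congr fun k => ?_
    push_cast
    rw [div_pow, one_pow]
  have hsummd : ∀ d : ℕ, 2 ≤ d → Summable (fun k : ℕ => (1 / ((k : ℝ) + 2)) ^ d) := by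
    intro d hd
    refine Summable.of_nonneg_of_le (fun k => by positivity) (fun k => ?_) hsum2
    refine pow_le_pow_of_le_one (by positivity) ?_ hd
    rw [div_le_one (by positivity)]
    linarith [Nat.cast_nonneg (α := ℝ) k]
  have hNbound : ∀ d : ℕ, 2 ≤ d →
      (P {ω | terminalRecordIndex (η d) ω ≠ 1}).toReal
        ≤ (1 / 2) ^ (d - 2) * ∑' k : ℕ, (1 / ((k : ℝ) + 2)) ^ 2 := by
    intro d hd
    have hrec : ∀ k : ℕ, P {ω | IsCompleteRecord (η d) (k + 2) ω}
        = ENNReal.ofReal ((1 / ((k : ℝ) + 2)) ^ d) := by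
      intro k
      have h1 := recordProb P (η d) (hmeas d) (hindep d) (hident d) (hcomp d) (hexp d) (k + 1)
      rw [isCompleteRecord_eq]
      have h2 : k + 1 + 1 = k + 2 := by omega
      rw [h2] at h1
      rw [h1, ← ENNReal.ofReal_pow (by positivity)]
      congr 2
      push_cast
      ring
    have hPN : P {ω | terminalRecordIndex (η d) ω ≠ 1}
        ≤ ENNReal.ofReal (∑' k : ℕ, (1 / ((k : ℝ) + 2)) ^ d) := by
      calc P {ω | terminalRecordIndex (η d) ω ≠ 1}
          ≤ P (⋃ k : ℕ, {ω | IsCompleteRecord (η d) (k + 2) ω}) := measure_mono (hNsub d)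
        _ ≤ ∑' k : ℕ, P {ω | IsCompleteRecord (η d) (k + 2) ω} := measure_iUnion_le _
        _ = ∑' k : ℕ, ENNReal.ofReal ((1 / ((k : ℝ) + 2)) ^ d) := tsum_congr fun k => hrec k
        _ = ENNReal.ofReal (∑' k : ℕ, (1 / ((k : ℝ) + 2)) ^ d) :=
            (ENNReal.ofReal_tsum_of_nonneg (fun k => by positivity) (hsummd d hd)).symm
    have h3 : (P {ω | terminalRecordIndex (η d) ω ≠ 1}).toReal
        ≤ ∑' k : ℕ, (1 / ((k : ℝ) + 2)) ^ d := by
      have := ENNReal.toReal_mono ENNReal.ofReal_ne_top hPN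
      rwa [ENNReal.toReal_ofReal (tsum_nonneg fun k => by positivity)] at this
    refine h3.trans ?_
    have h4 : ∀ k : ℕ, (1 / ((k : ℝ) + 2)) ^ d
        ≤ (1 / 2) ^ (d - 2) * (1 / ((k : ℝ) + 2)) ^ 2 := by
      intro k
      have hk2 : (0:ℝ) < (k : ℝ) + 2 := by positivity
      have h5 : (1 / ((k : ℝ) + 2)) ^ d = (1 / ((k : ℝ) + 2)) ^ (d - 2) *
          (1 / ((k : ℝ) + 2)) ^ 2 := by
        rw [← pow_add]
        congr 1
        omega
      rw [h5]
      refine mul_le_mul_of_nonneg_right ?_ (by positivity)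
      refine pow_le_pow_left₀ (by positivity) ?_ _
      rw [div_le_div_iff₀ hk2 two_pos]
      linarith [Nat.cast_nonneg (α := ℝ) k]
    calc ∑' k : ℕ, (1 / ((k : ℝ) + 2)) ^ d
        ≤ ∑' k : ℕ, (1 / 2 : ℝ) ^ (d - 2) * (1 / ((k : ℝ) + 2)) ^ 2 :=
          Summable.tsum_le_tsum h4 (hsummd d hd) (hsum2.mul_left _)
      _ = (1 / 2) ^ (d - 2) * ∑' k : ℕ, (1 / ((k : ℝ) + 2)) ^ 2 := tsum_mul_left
  have hctendsto : Tendsto (fun d : ℕ =>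
      (P {ω | terminalRecordIndex (η d) ω ≠ 1}).toReal) atTop (𝓝 0) := by
    have hup : Tendsto (fun d : ℕ => (1 / 2 : ℝ) ^ (d - 2)
        * ∑' k : ℕ, (1 / ((k : ℝ) + 2)) ^ 2) atTop (𝓝 0) := by
      have h1 : Tendsto (fun d : ℕ => (1 / 2 : ℝ) ^ (d - 2)) atTop (𝓝 0) := by
        have h2 : Tendsto (fun n : ℕ => (1 / 2 : ℝ) ^ n) atTop (𝓝 0) :=
          tendsto_pow_atTop_nhds_zero_of_lt_one (by norm_num) (by norm_num)
        exact h2.comp (tendsto_sub_atTop_nat 2)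
      simpa using h1.mul_const _
    refine tendsto_of_tendsto_of_tendsto_of_le_of_le' tendsto_const_nhds hup ?_ ?_
    · exact Filter.Eventually.of_forall fun d => ENNReal.toReal_nonneg
    · exact Filter.eventually_atTop.2 ⟨2, hNbound⟩
  refine ⟨?_, hBtendsto⟩
  -- sandwich for the terminal-record probability
  have hAB : ∀ d : ℕ,
      (P {ω | ∀ j : Fin d, η d (terminalRecordIndex (η d) ω) ω j ≤ x j}).toReal
        ≤ (P {ω | ∀ j : Fin d, η d 1 ω j ≤ x j}).toReal
          + (P {ω | terminalRecordIndex (η d) ω ≠ 1}).toReal ∧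
      (P {ω | ∀ j : Fin d, η d 1 ω j ≤ x j}).toReal
        ≤ (P {ω | ∀ j : Fin d, η d (terminalRecordIndex (η d) ω) ω j ≤ x j}).toReal
          + (P {ω | terminalRecordIndex (η d) ω ≠ 1}).toReal := by
    intro d
    set A := {ω | ∀ j : Fin d, η d (terminalRecordIndex (η d) ω) ω j ≤ x j} with hA
    set B := {ω | ∀ j : Fin d, η d 1 ω j ≤ x j} with hBs
    set N := {ω | terminalRecordIndex (η d) ω ≠ 1} with hN
    have h1 : A ⊆ B ∪ N := by
      intro ω hω
      by_cases h : terminalRecordIndex (η d) ω = 1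
      · left
        show ∀ j : Fin d, η d 1 ω j ≤ x (j : ℕ)
        rw [← h]
        exact hω
      · exact Or.inr h
    have h2 : B ⊆ A ∪ N := by
      intro ω hω
      by_cases h : terminalRecordIndex (η d) ω = 1
      · left
        show ∀ j : Fin d, η d (terminalRecordIndex (η d) ω) ω j ≤ x (j : ℕ)
        rw [h]
        exact hω
      · exact Or.inr h
    constructor
    · have h3 : P A ≤ P B + P N :=
        le_trans (measure_mono h1) (measure_union_le _ _)
      have h4 := ENNReal.toReal_mono
        (ENNReal.add_ne_top.mpr ⟨measure_ne_top _ _, measure_ne_top _ _⟩) h3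
      rwa [ENNReal.toReal_add (measure_ne_top _ _) (measure_ne_top _ _)] at h4
    · have h3 : P B ≤ P A + P N :=
        le_trans (measure_mono h2) (measure_union_le _ _)
      have h4 := ENNReal.toReal_mono
        (ENNReal.add_ne_top.mpr ⟨measure_ne_top _ _, measure_ne_top _ _⟩) h3
      rwa [ENNReal.toReal_add (measure_ne_top _ _) (measure_ne_top _ _)] at h4
  have hlow : Tendsto (fun d : ℕ => (P {ω | ∀ j : Fin d, η d 1 ω j ≤ x j}).toReal
      - (P {ω | terminalRecordIndex (η d) ω ≠ 1}).toReal) atTop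
      (𝓝 (Real.exp (∑' i, x i))) := by
    simpa using hBtendsto.sub hctendsto
  have hup : Tendsto (fun d : ℕ => (P {ω | ∀ j : Fin d, η d 1 ω j ≤ x j}).toReal
      + (P {ω | terminalRecordIndex (η d) ω ≠ 1}).toReal) atTop
      (𝓝 (Real.exp (∑' i, x i))) := by
    simpa using hBtendsto.add hctendsto
  refine tendsto_of_tendsto_of_tendsto_of_le_of_le hlow hup ?_ ?_
  · exact fun d => by linarith [(hAB d).2]
  · exact fun d => by linarith [(hAB d).1]
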